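/- For λ ∈ (0,1), the reciprocal of the degenerate gamma function admits the Weierstrass-type product: 1/Γ_λ(z) = λ^z Γ(1/λ) z (1/λ − z) e^{γ/λ} ∏_{n=1}^∞ [ e^{-1/(nλ)} (1 + z/n)(1 + (1/λ − z)/n) ], valid for 0 < Re(z) < 1/λ, where γ is the Euler–Mascheroni constant. -/

import Mathlib

open MeasureTheory Complex Filter Set

noncomputable def degGamma (l : ℝ) (s : ℂ) : ℂ :=
  ∫ t in Set.Ioi (0 : ℝ), ((1 + l * t : ℝ) : ℂ) ^ (-(1 / l) : ℂ) * (t : ℂ) ^ (s - 1)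

lemma degGamma_eq (l : ℝ) (hl0 : 0 < l) (z : ℂ) (hz : 0 < z.re) (hz' : z.re < 1 / l) :
    degGamma l z = (l : ℂ) ^ (-z) * Complex.Gamma z * Complex.Gamma ((1/l : ℂ) - z)
      / Complex.Gamma ((1/l : ℂ)) := by
  set w : ℂ := (1/l : ℂ) - z with hw
  have hwre : 0 < w.re := by
    simp only [hw, sub_re, one_div, Complex.inv_re, ofReal_re, normSq_ofReal]
    rw [div_eq_mul_inv]
    have : l * (l*l)⁻¹ = 1/l := by field_simp
    rw [this]
    linarith
  have hf : ∀ x ∈ Ioo (0:ℝ) 1, HasDerivWithinAt (fun x : ℝ => x / (l * (1 - x)))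
      (1 / (l * (1 - x)^2)) (Ioo (0:ℝ) 1) x := by
    intro x hx
    have hx1 : (1:ℝ) - x ≠ 0 := by simp only [mem_Ioo] at hx; intro h; nlinarith [hx.2]
    have hd : HasDerivAt (fun x : ℝ => x / (l * (1 - x)))
        ((1 * (l * (1-x)) - x * (0 * (1 - x) + l * (0 - 1))) / (l * (1 - x))^2) x := by
      exact (hasDerivAt_id x).div ((hasDerivAt_const x l).mul
        ((hasDerivAt_const x (1:ℝ)).sub (hasDerivAt_id x))) (by positivity)
    have : (1 * (l * (1-x)) - x * (0 * (1 - x) + l * (0 - 1))) / (l * (1 - x))^2 = 1 / (l * (1-x)^2) := by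
      field_simp; ring
    rw [this] at hd
    exact hd.hasDerivWithinAt
  have hinj : InjOn (fun x : ℝ => x / (l * (1 - x))) (Ioo (0:ℝ) 1) := by
    intro x hx y hy h
    simp only [mem_Ioo] at hx hy
    have hx1 : (0:ℝ) < l * (1 - x) := by nlinarith [hx.2]
    have hy1 : (0:ℝ) < l * (1 - y) := by nlinarith [hy.2]
    rw [div_eq_div_iff (ne_of_gt hx1) (ne_of_gt hy1)] at h
    nlinarith
  have himg : (fun x : ℝ => x / (l * (1 - x))) '' (Ioo (0:ℝ) 1) = Ioi (0:ℝ) := by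
    ext t
    constructor
    · rintro ⟨x, hx, rfl⟩
      simp only [mem_Ioo] at hx
      have : (0:ℝ) < l * (1 - x) := by nlinarith [hx.2]
      exact div_pos hx.1 this
    · intro ht
      simp only [mem_Ioi] at ht
      refine ⟨l * t / (1 + l * t), ?_, ?_⟩
      · constructor
        · positivity
        · rw [div_lt_one (by positivity)]; nlinarith
      · have h1 : (0:ℝ) < 1 + l * t := by positivity
        field_simp; ring
  have key : degGamma l z = ∫ x in Ioo (0:ℝ) 1,
      (l : ℂ) ^ (-z) * ((x:ℂ) ^ (z - 1) * (1 - (x:ℂ)) ^ (w - 1)) := by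
    rw [degGamma, ← himg, integral_image_eq_integral_abs_deriv_smul measurableSet_Ioo hf hinj]
    refine setIntegral_congr_fun measurableSet_Ioo (fun x hx => ?_)
    simp only [mem_Ioo] at hx
    have hx0 := hx.1
    have hx1 : (0:ℝ) < 1 - x := by linarith [hx.2]
    have hexp : ∀ (a : ℝ), 0 < a → ∀ s : ℂ, ((a:ℝ):ℂ) ^ s = Complex.exp (↑(Real.log a) * s) := by
      intro a ha s
      rw [Complex.cpow_def_of_ne_zero (by exact_mod_cast ha.ne'), Complex.ofReal_log ha.le]
    have h1 : 1 + l * (x / (l * (1 - x))) = (1-x)⁻¹ := by field_simp; ring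
    have h2 : (1 : ℂ) - (x:ℂ) = ((1 - x : ℝ) : ℂ) := by push_cast; ring
    have habs : |1 / (l * (1 - x)^2)| = 1 / (l * (1-x)^2) := abs_of_pos (by positivity)
    rw [habs, real_smul, h1, h2, hexp _ (by positivity) _, hexp _ (by positivity) _,
      hexp _ hx0 _, hexp _ hx1 _, hexp _ hl0 _]
    have hsc : ((1 / (l * (1 - x)^2) : ℝ) : ℂ) = Complex.exp (↑(Real.log (1 / (l * (1-x)^2)))) := by
      rw [← Real.exp_log (show (0:ℝ) < 1 / (l * (1-x)^2) by positivity), Complex.ofReal_exp,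
        Real.log_exp]
    rw [hsc]
    simp only [← Complex.exp_add]
    congr 1
    have la : Real.log (1 / (l * (1-x)^2)) = -(Real.log l + 2 * Real.log (1-x)) := by
      rw [one_div, Real.log_inv, Real.log_mul (ne_of_gt hl0) (by positivity), Real.log_pow]
      push_cast; ring
    have lb : Real.log ((1-x)⁻¹) = -Real.log (1-x) := Real.log_inv _
    have lc : Real.log (x / (l * (1-x))) = Real.log x - (Real.log l + Real.log (1-x)) := by
      rw [Real.log_div (ne_of_gt hx0) (by positivity), Real.log_mul (ne_of_gt hl0) (ne_of_gt hx1)]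
    rw [la, lb, lc, hw]
    push_cast
    ring
  rw [key, MeasureTheory.integral_const_mul]
  have hbeta : ∫ x in Ioo (0:ℝ) 1, (x:ℂ) ^ (z - 1) * (1 - (x:ℂ)) ^ (w - 1)
      = Complex.betaIntegral z w := by
    rw [Complex.betaIntegral, intervalIntegral.integral_of_le zero_le_one,
      MeasureTheory.integral_Ioc_eq_integral_Ioo]
  rw [hbeta]
  have hzw : z + w = (1/l : ℂ) := by rw [hw]; ring
  have hG := Complex.Gamma_mul_Gamma_eq_betaIntegral hz hwre
  rw [hzw] at hG
  have hGne : Complex.Gamma ((1/l:ℂ)) ≠ 0 := by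
    refine Complex.Gamma_ne_zero_of_re_pos ?_
    simp only [one_div, Complex.inv_re, ofReal_re, normSq_ofReal]
    positivity
  rw [eq_div_iff hGne]
  linear_combination (-(l:ℂ) ^ (-z)) * hG

lemma prod_aux (u : ℂ) (hu : 0 < u.re) (N : ℕ) (hN : N ≠ 0) :
    u * ∏ n ∈ Finset.range N, (1 + u / ((n : ℂ) + 1))
      = (N : ℂ) ^ u / Complex.GammaSeq u N := by
  have hne : ∀ j : ℕ, u + (j : ℂ) ≠ 0 := by
    intro j h
    have h2 := congrArg Complex.re h
    simp only [Complex.add_re, Complex.natCast_re, Complex.zero_re] at h2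
    have : (0:ℝ) ≤ (j:ℝ) := Nat.cast_nonneg j
    linarith
  have h1 : ∀ n ∈ Finset.range N, (1 + u / ((n:ℂ)+1)) = (u + ((n:ℂ)+1)) / ((n:ℂ)+1) := by
    intro n _
    have : ((n:ℂ)+1) ≠ 0 := Nat.cast_add_one_ne_zero n
    field_simp
    ring
  rw [Finset.prod_congr rfl h1, Finset.prod_div_distrib]
  have h2 : ∏ n ∈ Finset.range N, ((n:ℂ)+1) = ((Nat.factorial N : ℕ) : ℂ) := by
    rw [← Finset.prod_range_add_one_eq_factorial N]
    push_cast
    rfl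
  have h3 : ∏ j ∈ Finset.range (N+1), (u + (j:ℂ))
      = (∏ n ∈ Finset.range N, (u + ((n:ℂ)+1))) * u := by
    rw [Finset.prod_range_succ']
    push_cast
    simp
  have hA : (∏ n ∈ Finset.range N, (u + ((n:ℂ)+1))) ≠ 0 := by
    refine Finset.prod_ne_zero_iff.mpr (fun n _ => ?_)
    have h := hne (n+1)
    push_cast at h
    convert h using 2
  have hNc : ((N:ℂ)) ≠ 0 := Nat.cast_ne_zero.mpr hN
  have hNu : (N:ℂ) ^ u ≠ 0 := by
    rw [Complex.cpow_def_of_ne_zero hNc]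
    exact Complex.exp_ne_zero _
  have hfac : ((Nat.factorial N : ℕ) : ℂ) ≠ 0 := Nat.cast_ne_zero.mpr (Nat.factorial_ne_zero N)
  rw [Complex.GammaSeq, h3, h2]
  have hu0 : u ≠ 0 := by
    intro h; rw [h] at hu; simp at hu
  field_simp

lemma gammaSeq_ne_zero (u : ℂ) (hu : 0 < u.re) (N : ℕ) (hN : N ≠ 0) :
    Complex.GammaSeq u N ≠ 0 := by
  have hNc : ((N:ℂ)) ≠ 0 := Nat.cast_ne_zero.mpr hN
  have hNu : (N:ℂ) ^ u ≠ 0 := by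
    rw [Complex.cpow_def_of_ne_zero hNc]
    exact Complex.exp_ne_zero _
  have hfac : ((Nat.factorial N : ℕ) : ℂ) ≠ 0 := Nat.cast_ne_zero.mpr (Nat.factorial_ne_zero N)
  have hprodne : (∏ j ∈ Finset.range (N+1), (u + (j:ℂ))) ≠ 0 := by
    refine Finset.prod_ne_zero_iff.mpr (fun j _ => fun h => ?_)
    have h2 := congrArg Complex.re h
    simp only [Complex.add_re, Complex.natCast_re, Complex.zero_re] at h2
    have : (0:ℝ) ≤ (j:ℝ) := Nat.cast_nonneg j
    linarith
  rw [Complex.GammaSeq]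
  exact div_ne_zero (mul_ne_zero hNu hfac) hprodne

theorem degGamma_weierstrass (l : ℝ) (hl : l ∈ Set.Ioo (0 : ℝ) 1)
    (z : ℂ) (hz : 0 < z.re) (hz' : z.re < 1 / l) :
    Tendsto (fun N : ℕ =>
        (l : ℂ) ^ z * Complex.Gamma (1 / l) * z * ((1 / l : ℂ) - z) *
          Complex.exp ((Real.eulerMascheroniConstant : ℂ) / l) *
          ∏ n ∈ Finset.range N,
            Complex.exp (-(1 / ((n + 1) * l : ℂ))) * (1 + z / (n + 1)) *
              (1 + ((1 / l : ℂ) - z) / (n + 1)))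
      atTop (nhds (1 / degGamma l z)) := by
  obtain ⟨hl0, hl1⟩ := hl
  set w : ℂ := (1/l : ℂ) - z with hw
  have hwre : 0 < w.re := by
    simp only [hw, Complex.sub_re, one_div, Complex.inv_re, Complex.ofReal_re,
      Complex.normSq_ofReal]
    rw [div_eq_mul_inv]
    have : l * (l*l)⁻¹ = 1/l := by field_simp
    rw [this]
    linarith
  have hlc : (l:ℂ) ≠ 0 := Complex.ofReal_ne_zero.mpr (ne_of_gt hl0)
  have hGz : Complex.Gamma z ≠ 0 := Complex.Gamma_ne_zero_of_re_pos hz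
  have hGw : Complex.Gamma w ≠ 0 := Complex.Gamma_ne_zero_of_re_pos hwre
  have hGl : Complex.Gamma ((1:ℂ)/l) ≠ 0 := by
    refine Complex.Gamma_ne_zero_of_re_pos ?_
    simp only [one_div, Complex.inv_re, Complex.ofReal_re, Complex.normSq_ofReal]
    positivity
  set C : ℂ := (l : ℂ) ^ z * Complex.Gamma (1 / l) with hC
  set F : ℕ → ℂ := fun N => C *
      Complex.exp ((↑(Real.eulerMascheroniConstant + Real.log N - ((harmonic N : ℚ) : ℝ)) : ℂ) / l)
      / (Complex.GammaSeq z N * Complex.GammaSeq w N) with hF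
  have heq : ∀ᶠ N : ℕ in atTop, (l : ℂ) ^ z * Complex.Gamma (1 / l) * z * ((1 / l : ℂ) - z) *
      Complex.exp ((Real.eulerMascheroniConstant : ℂ) / l) *
      ∏ n ∈ Finset.range N,
        Complex.exp (-(1 / ((n + 1) * l : ℂ))) * (1 + z / (n + 1)) *
          (1 + ((1 / l : ℂ) - z) / (n + 1)) = F N := by
    filter_upwards [eventually_ne_atTop 0] with N hN
    have hNc : ((N:ℂ)) ≠ 0 := Nat.cast_ne_zero.mpr hN
    rw [Finset.prod_mul_distrib, Finset.prod_mul_distrib]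
    have e1 : ∏ n ∈ Finset.range N, Complex.exp (-(1 / ((n + 1) * l : ℂ)))
        = Complex.exp (-(((harmonic N : ℚ) : ℂ)) / l) := by
      rw [← Complex.exp_sum]
      congr 1
      have : ((harmonic N : ℚ) : ℂ) = ∑ n ∈ Finset.range N, (1 / ((n:ℂ)+1)) := by
        rw [harmonic]
        push_cast
        simp [one_div]
      rw [this, neg_div, Finset.sum_div, ← Finset.sum_neg_distrib]
      exact Finset.sum_congr rfl (fun n _ => by rw [div_mul_eq_div_div])
    have e2 := prod_aux z hz N hN
    have e3 := prod_aux w hwre N hN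
    have hGSz : Complex.GammaSeq z N ≠ 0 := gammaSeq_ne_zero z hz N hN
    have hGSw : Complex.GammaSeq w N ≠ 0 := gammaSeq_ne_zero w hwre N hN
    have e4 : ((N:ℂ)) ^ z * (N:ℂ) ^ w = Complex.exp (((Real.log N : ℝ) : ℂ) / l) := by
      rw [← Complex.cpow_add _ _ hNc]
      have hzw : z + w = 1/(l:ℂ) := by rw [hw]; ring
      rw [hzw, Complex.cpow_def_of_ne_zero hNc]
      congr 1
      rw [show ((N:ℕ):ℂ) = (((N:ℝ)):ℂ) by push_cast; rfl,
        ← Complex.ofReal_log (Nat.cast_nonneg N), mul_one_div]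
    have e5 : Complex.exp
        ((↑(Real.eulerMascheroniConstant + Real.log N - ((harmonic N : ℚ):ℝ)) : ℂ)/l)
        = Complex.exp ((Real.eulerMascheroniConstant : ℂ)/l) *
          Complex.exp (-(((harmonic N : ℚ) : ℂ))/l) *
          Complex.exp (((Real.log N : ℝ) : ℂ)/l) := by
      rw [← Complex.exp_add, ← Complex.exp_add]
      congr 1
      push_cast
      ring
    rw [e1, hF]
    simp only []
    rw [e5]
    have key : C * z * w * Complex.exp ((Real.eulerMascheroniConstant : ℂ)/l) *
        (Complex.exp (-(((harmonic N : ℚ) : ℂ))/l) *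
          (∏ n ∈ Finset.range N, (1 + z / ((n:ℂ) + 1))) *
          (∏ n ∈ Finset.range N, (1 + w / ((n:ℂ) + 1))))
        = C * ((z * ∏ n ∈ Finset.range N, (1 + z / ((n:ℂ) + 1))) *
            (w * ∏ n ∈ Finset.range N, (1 + w / ((n:ℂ) + 1)))) *
          (Complex.exp ((Real.eulerMascheroniConstant : ℂ)/l) *
            Complex.exp (-(((harmonic N : ℚ) : ℂ))/l)) := by ring
    rw [key, e2, e3, div_mul_div_comm, e4]
    field_simp
  have hreal : Tendsto (fun N : ℕ =>
      Real.eulerMascheroniConstant + Real.log N - ((harmonic N : ℚ):ℝ)) atTop (nhds 0) := by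
    have h := Real.tendsto_harmonic_sub_log
    have h2 := (tendsto_const_nhds
      (x := Real.eulerMascheroniConstant) (f := atTop (α := ℕ))).sub h
    rw [sub_self] at h2
    exact h2.congr (fun N => by ring)
  have hexp1 : Tendsto (fun N : ℕ => Complex.exp
      ((↑(Real.eulerMascheroniConstant + Real.log N - ((harmonic N : ℚ):ℝ)) : ℂ)/l))
      atTop (nhds 1) := by
    have h2 : Tendsto (fun N : ℕ =>
        ((Real.eulerMascheroniConstant + Real.log N - ((harmonic N : ℚ):ℝ) : ℝ) : ℂ))
        atTop (nhds 0) := by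
      simpa only [Function.comp_def, Complex.ofReal_zero] using
        (Complex.continuous_ofReal.tendsto 0).comp hreal
    have h3 := h2.div_const ((l:ℂ))
    rw [zero_div] at h3
    have h4 := (Complex.continuous_exp.tendsto 0).comp h3
    simpa [Function.comp_def] using h4
  have hden : Tendsto (fun N : ℕ => Complex.GammaSeq z N * Complex.GammaSeq w N) atTop
      (nhds (Complex.Gamma z * Complex.Gamma w)) :=
    (Complex.GammaSeq_tendsto_Gamma z).mul (Complex.GammaSeq_tendsto_Gamma w)
  have hFt : Tendsto F atTop (nhds (C * 1 / (Complex.Gamma z * Complex.Gamma w))) :=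
    (tendsto_const_nhds.mul hexp1).div hden (mul_ne_zero hGz hGw)
  have hval : C * 1 / (Complex.Gamma z * Complex.Gamma w) = 1 / degGamma l z := by
    rw [degGamma_eq l hl0 z hz hz', Complex.cpow_neg]
    have hlz : (l:ℂ) ^ z ≠ 0 := by
      rw [Complex.cpow_def_of_ne_zero hlc]
      exact Complex.exp_ne_zero _
    rw [hC, ← hw]
    field_simp
  rw [← hval]
  exact Tendsto.congr' (Filter.EventuallyEq.symm heq) hFt
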